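/- For the anti-Pell numbers (a = (1,2)), the subsequence A_{3n+1} is the arithmetic progression A_{3n+1} = 5 + 21n for all n ≥ 0. -/
import Mathlib


/-- `A` and `B` (indexed from 1) are complementary strictly increasing sequences
of positive integers: every positive integer lies in exactly one of their ranges. -/
def CompPair (A B : ℕ → ℕ) : Prop :=
  StrictMonoOn A (Set.Ici 1) ∧ StrictMonoOn B (Set.Ici 1) ∧
  (∀ n, 1 ≤ n → 1 ≤ A n) ∧ (∀ n, 1 ≤ n → 1 ≤ B n) ∧
  ∀ m, 1 ≤ m →
    ((∃ n, 1 ≤ n ∧ A n = m) ∧ ¬(∃ n, 1 ≤ n ∧ B n = m)) ∨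
    (¬(∃ n, 1 ≤ n ∧ A n = m) ∧ (∃ n, 1 ≤ n ∧ B n = m))

/-- `(A, B)` is the anti-recurrence pair for the positive linear form `a` of dimension `k`:
`A n = Σ_{j=1}^k a_j * B_{(n-1)k+j}` for all `n ≥ 1`. -/
def AntiRec (k : ℕ) (a : Fin k → ℕ) (A B : ℕ → ℕ) : Prop :=
  CompPair A B ∧
  ∀ n, 1 ≤ n → A n = ∑ j : Fin k, a j * B ((n - 1) * k + (j : ℕ) + 1)

/-- The anti-Pell subsequence A_{3n+1} is the arithmetic progression 5 + 21n. -/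
theorem stmt18 (A B : ℕ → ℕ) (h : AntiRec 2 ![1, 2] A B) :
    ∀ n : ℕ, A (3 * n + 1) = 5 + 21 * n := by
  obtain ⟨⟨hAm, hBm, hApos, hBpos, hcomp⟩, hrec⟩ := h
  have hrec2 : ∀ n, 1 ≤ n → A n = B (2*n-1) + 2 * B (2*n) := by
    intro n hn
    have h := hrec n hn
    rw [Fin.sum_univ_two] at h
    simp only [Matrix.cons_val_zero, Matrix.cons_val_one, Matrix.head_cons,
      Fin.val_zero, Fin.val_one, one_mul, add_zero] at h
    have e1 : (n-1)*2 + 1 = 2*n-1 := by omega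
    have e2 : (n-1)*2 + 1 + 1 = 2*n := by omega
    rw [e2, e1] at h
    exact h
  have hAle : ∀ i j, 1 ≤ i → i ≤ j → A i ≤ A j := by
    intro i j hi hij
    rcases Nat.eq_or_lt_of_le hij with rfl | hlt
    · exact le_rfl
    · exact (hAm (Set.mem_Ici.mpr hi) (Set.mem_Ici.mpr (hi.trans hij)) hlt).le
  have hBle : ∀ i j, 1 ≤ i → i ≤ j → B i ≤ B j := by
    intro i j hi hij
    rcases Nat.eq_or_lt_of_le hij with rfl | hlt
    · exact le_rfl
    · exact (hBm (Set.mem_Ici.mpr hi) (Set.mem_Ici.mpr (hi.trans hij)) hlt).le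
  have hBlt : ∀ i j, 1 ≤ i → i < j → B i < B j := by
    intro i j hi hij
    exact hBm (Set.mem_Ici.mpr hi) (Set.mem_Ici.mpr (by omega)) hij
  -- every A value is at least 5
  have hA5 : ∀ s, 1 ≤ s → 5 ≤ A s := by
    intro s hs
    have h := hrec2 s hs
    have h1 : 1 ≤ B (2*s-1) := hBpos _ (by omega)
    have h2 : B (2*s-1) < B (2*s) := hBlt _ _ (by omega) (by omega)
    omega
  -- if w is not an A value then it is a B value, pinned as successor of a known B value
  have pin : ∀ s v w, 1 ≤ s → B s = v → v < w → (∀ t, 1 ≤ t → A t ≠ w) →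
      (∀ u, v < u → u < w → ∃ m, 1 ≤ m ∧ A m = u) → B (s+1) = w := by
    intro s v w hs hBs hvw hnA hmid
    have hw1 : 1 ≤ w := by have := hBpos s hs; omega
    rcases hcomp w hw1 with ⟨⟨t, ht, hAt⟩, _⟩ | ⟨_, ⟨t, ht, hBt⟩⟩
    · exact absurd hAt (hnA t ht)
    · have hst : s < t := by
        by_contra hle
        push_neg at hle
        have := hBle t s ht hle
        omega
      rcases Nat.eq_or_lt_of_le (Nat.succ_le_of_lt hst) with heq | hlt
      · rw [← heq] at hBt; exact hBt
      · exfalso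
        have hlow : B s < B (s+1) := hBlt _ _ hs (by omega)
        have hhigh : B (s+1) < B t := hBlt _ _ (by omega) hlt
        obtain ⟨m, hm, hAm'⟩ := hmid (B (s+1)) (by omega) (by omega)
        have hpos : 1 ≤ B (s+1) := hBpos _ (by omega)
        rcases hcomp (B (s+1)) hpos with ⟨_, hnB⟩ | ⟨hnA', _⟩
        · exact hnB ⟨s+1, by omega, rfl⟩
        · exact hnA' ⟨m, hm, hAm'⟩
  have pin1 : (∀ t, 1 ≤ t → A t ≠ 1) → B 1 = 1 := by
    intro hnA
    rcases hcomp 1 le_rfl with ⟨⟨t, ht, hAt⟩, _⟩ | ⟨_, ⟨t, ht, hBt⟩⟩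
    · exact absurd hAt (hnA t ht)
    · have h1 := hBpos 1 le_rfl
      have := hBle 1 t le_rfl ht
      omega
  have notA2 : ∀ p w, 1 ≤ p → A p < w → w < A (p+2) → A (p+1) ≠ w →
      ∀ t, 1 ≤ t → A t ≠ w := by
    intro p w hp h1 h2 h3 t ht
    rcases lt_trichotomy t (p+1) with hc | hc | hc
    · have := hAle t p ht (by omega); omega
    · rw [hc]; exact h3
    · have := hAle (p+2) t (by omega) (by omega); omega
  -- key invariant
  have key : ∀ n, B (6*n+1) = 7*n+1 ∧ B (6*n+2) = 7*n+2 ∧ B (6*n+3) = 7*n+3 ∧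
      B (6*n+6) = 7*n+7 := by
    intro N
    induction N using Nat.strong_induction_on with
    | _ n IH =>
      rcases Nat.eq_zero_or_pos n with rfl | hn
      · -- base case
        have nA1 : ∀ t, 1 ≤ t → A t ≠ 1 := fun t ht => by have := hA5 t ht; omega
        have nA2 : ∀ t, 1 ≤ t → A t ≠ 2 := fun t ht => by have := hA5 t ht; omega
        have nA3 : ∀ t, 1 ≤ t → A t ≠ 3 := fun t ht => by have := hA5 t ht; omega
        have nA4 : ∀ t, 1 ≤ t → A t ≠ 4 := fun t ht => by have := hA5 t ht; omega
        have hB1 : B 1 = 1 := pin1 nA1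
        have hB2 : B 2 = 2 := pin 1 1 2 (by omega) hB1 (by omega) nA2
          (fun u h1 h2 => absurd h2 (by omega))
        have hB3 : B 3 = 3 := pin 2 2 3 (by omega) hB2 (by omega) nA3
          (fun u h1 h2 => absurd h2 (by omega))
        have hB4 : B 4 = 4 := pin 3 3 4 (by omega) hB3 (by omega) nA4
          (fun u h1 h2 => absurd h2 (by omega))
        have hA1 : A 1 = 5 := by
          have h := hrec2 1 le_rfl
          norm_num at h
          omega
        have hA2 : A 2 = 11 := by
          have h := hrec2 2 (by omega)
          norm_num at h
          omega
        have nA6 : ∀ t, 1 ≤ t → A t ≠ 6 := by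
          intro t ht
          rcases Nat.eq_or_lt_of_le ht with rfl | ht2
          · omega
          · have := hAle 2 t (by omega) (by omega); omega
        have nA7 : ∀ t, 1 ≤ t → A t ≠ 7 := by
          intro t ht
          rcases Nat.eq_or_lt_of_le ht with rfl | ht2
          · omega
          · have := hAle 2 t (by omega) (by omega); omega
        have hB5 : B 5 = 6 := pin 4 4 6 (by omega) hB4 (by omega) nA6
          (fun u h1 h2 => ⟨1, le_rfl, by omega⟩)
        have hB6 : B 6 = 7 := pin 5 6 7 (by omega) hB5 (by omega) nA7
          (fun u h1 h2 => absurd h2 (by omega))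
        refine ⟨?_, ?_, ?_, ?_⟩ <;> simpa using by first | exact hB1 | exact hB2 | exact hB3 | exact hB6
      · -- inductive step, n ≥ 1
        have Abnd : ∀ m, 1 ≤ m → m ≤ 3*n → 7*m - 3 ≤ A m ∧ A m ≤ 7*m - 1 := by
          intro m hm hm3
          obtain ⟨q, r, hr, hmq⟩ : ∃ q r, r < 3 ∧ m = 3*q + r + 1 :=
            ⟨(m-1)/3, (m-1)%3, by omega, by omega⟩
          have hq : q < n := by omega
          obtain ⟨b1, b2, b3, b6⟩ := IH q hq
          have h34 : B (6*q+3) < B (6*q+4) := hBlt _ _ (by omega) (by omega)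
          have h45 : B (6*q+4) < B (6*q+5) := hBlt _ _ (by omega) (by omega)
          have h56 : B (6*q+5) < B (6*q+6) := hBlt _ _ (by omega) (by omega)
          have hre := hrec2 m (by omega)
          interval_cases r
          · have e1 : 2*m-1 = 6*q+1 := by omega
            have e2 : 2*m = 6*q+2 := by omega
            rw [e1, e2] at hre; omega
          · have e1 : 2*m-1 = 6*q+3 := by omega
            have e2 : 2*m = 6*q+4 := by omega
            rw [e1, e2] at hre; omega
          · have e1 : 2*m-1 = 6*q+5 := by omega
            have e2 : 2*m = 6*q+6 := by omega
            rw [e1, e2] at hre; omega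
        obtain ⟨_, _, _, bp6⟩ := IH (n-1) (by omega)
        have b6n : B (6*n) = 7*n := by
          have e1 : 6*(n-1)+6 = 6*n := by omega
          have e2 : 7*(n-1)+7 = 7*n := by omega
          rw [e1, e2] at bp6; exact bp6
        have hAn := Abnd n hn (by omega)
        have hAn1 := Abnd (n+1) (by omega) (by omega)
        have hAn2 := Abnd (n+2) (by omega) (by omega)
        have nw1 : ∀ t, 1 ≤ t → A t ≠ 7*n+1 :=
          notA2 n _ hn (by omega) (by omega) (by omega)
        have nw2 : ∀ t, 1 ≤ t → A t ≠ 7*n+2 :=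
          notA2 n _ hn (by omega) (by omega) (by omega)
        have nw3 : ∀ t, 1 ≤ t → A t ≠ 7*n+3 :=
          notA2 n _ hn (by omega) (by omega) (by omega)
        have hB1 : B (6*n+1) = 7*n+1 := by
          have := pin (6*n) (7*n) (7*n+1) (by omega) b6n (by omega) nw1
            (fun u h1 h2 => absurd h2 (by omega))
          have e : 6*n+1 = 6*n+1 := rfl
          convert this using 2 <;> omega
        have hB2 : B (6*n+2) = 7*n+2 := by
          have := pin (6*n+1) (7*n+1) (7*n+2) (by omega) hB1 (by omega) nw2
            (fun u h1 h2 => absurd h2 (by omega))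
          convert this using 2 <;> omega
        have hB3 : B (6*n+3) = 7*n+3 := by
          have := pin (6*n+2) (7*n+2) (7*n+3) (by omega) hB2 (by omega) nw3
            (fun u h1 h2 => absurd h2 (by omega))
          convert this using 2 <;> omega
        have ha : A (n+1) = 7*n+4 ∨ A (n+1) = 7*n+5 ∨ A (n+1) = 7*n+6 := by omega
        have hB6 : B (6*n+6) = 7*n+7 := by
          rcases ha with ha | ha | ha
          · have nw5 : ∀ t, 1 ≤ t → A t ≠ 7*n+5 :=
              notA2 n _ hn (by omega) (by omega) (by omega)
            have nw6 : ∀ t, 1 ≤ t → A t ≠ 7*n+6 :=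
              notA2 n _ hn (by omega) (by omega) (by omega)
            have nw7 : ∀ t, 1 ≤ t → A t ≠ 7*n+7 :=
              notA2 n _ hn (by omega) (by omega) (by omega)
            have hB4 : B (6*n+4) = 7*n+5 := by
              have := pin (6*n+3) (7*n+3) (7*n+5) (by omega) hB3 (by omega) nw5
                (fun u h1 h2 => ⟨n+1, by omega, by omega⟩)
              convert this using 2 <;> omega
            have hB5 : B (6*n+5) = 7*n+6 := by
              have := pin (6*n+4) (7*n+5) (7*n+6) (by omega) hB4 (by omega) nw6
                (fun u h1 h2 => absurd h2 (by omega))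
              convert this using 2 <;> omega
            have := pin (6*n+5) (7*n+6) (7*n+7) (by omega) hB5 (by omega) nw7
              (fun u h1 h2 => absurd h2 (by omega))
            convert this using 2 <;> omega
          · have nw4 : ∀ t, 1 ≤ t → A t ≠ 7*n+4 :=
              notA2 n _ hn (by omega) (by omega) (by omega)
            have nw6 : ∀ t, 1 ≤ t → A t ≠ 7*n+6 :=
              notA2 n _ hn (by omega) (by omega) (by omega)
            have nw7 : ∀ t, 1 ≤ t → A t ≠ 7*n+7 :=
              notA2 n _ hn (by omega) (by omega) (by omega)
            have hB4 : B (6*n+4) = 7*n+4 := by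
              have := pin (6*n+3) (7*n+3) (7*n+4) (by omega) hB3 (by omega) nw4
                (fun u h1 h2 => absurd h2 (by omega))
              convert this using 2 <;> omega
            have hB5 : B (6*n+5) = 7*n+6 := by
              have := pin (6*n+4) (7*n+4) (7*n+6) (by omega) hB4 (by omega) nw6
                (fun u h1 h2 => ⟨n+1, by omega, by omega⟩)
              convert this using 2 <;> omega
            have := pin (6*n+5) (7*n+6) (7*n+7) (by omega) hB5 (by omega) nw7
              (fun u h1 h2 => absurd h2 (by omega))
            convert this using 2 <;> omega
          · have nw4 : ∀ t, 1 ≤ t → A t ≠ 7*n+4 :=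
              notA2 n _ hn (by omega) (by omega) (by omega)
            have nw5 : ∀ t, 1 ≤ t → A t ≠ 7*n+5 :=
              notA2 n _ hn (by omega) (by omega) (by omega)
            have nw7 : ∀ t, 1 ≤ t → A t ≠ 7*n+7 :=
              notA2 n _ hn (by omega) (by omega) (by omega)
            have hB4 : B (6*n+4) = 7*n+4 := by
              have := pin (6*n+3) (7*n+3) (7*n+4) (by omega) hB3 (by omega) nw4
                (fun u h1 h2 => absurd h2 (by omega))
              convert this using 2 <;> omega
            have hB5 : B (6*n+5) = 7*n+5 := by
              have := pin (6*n+4) (7*n+4) (7*n+5) (by omega) hB4 (by omega) nw5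
                (fun u h1 h2 => absurd h2 (by omega))
              convert this using 2 <;> omega
            have := pin (6*n+5) (7*n+5) (7*n+7) (by omega) hB5 (by omega) nw7
              (fun u h1 h2 => ⟨n+1, by omega, by omega⟩)
            convert this using 2 <;> omega
        exact ⟨hB1, hB2, hB3, hB6⟩
  intro n
  obtain ⟨b1, b2, _, _⟩ := key n
  have h := hrec2 (3*n+1) (by omega)
  have e1 : 2*(3*n+1)-1 = 6*n+1 := by omega
  have e2 : 2*(3*n+1) = 6*n+2 := by omega
  rw [e1, e2, b1, b2] at h
  omega
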